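/- Gradient flow convergence rate with Łojasiewicz exponent θ ∈ (1/2, 1): Under the setup of the Łojasiewicz gradient inequality ‖E'(x)‖_H ≥ c |E(x) − E(x_∞)|^θ on U_σ with θ ∈ (1/2, 1), if u solves u̇ = −E'(u) with orbit in U_σ and a ≤ E ≤ γ on U, then there exists u_∞ ∈ H with ‖u(t) − u_∞‖_H ≤ (1/(c(1−θ))) (c²(2θ−1) t + (γ − a)^{1−2θ})^{−(1−θ)/(2θ−1)} for all t ≥ 0; in particular convergence occurs at a power-law rate t^{−(1−θ)/(2θ−1)}. -/

import Mathlib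

set_option maxHeartbeats 2000000 in
/-- Gradient flow convergence rate with Łojasiewicz exponent `θ ∈ (1/2, 1)`: if `E` obeys
`‖E'(x)‖_H ≥ c |E(x) − E(x_∞)|^θ` on the `X`-ball `U_σ` about a critical point `x_∞`, and `u`
solves `u̇ = −E'(u)` with orbit in `U_σ`, with `a ≤ E ≤ γ` on `U`, then there is `u_∞ ∈ H`
with `‖u(t) − u_∞‖_H ≤ (1/(c(1−θ))) (c²(2θ−1) t + (γ−a)^{1−2θ})^{−(1−θ)/(2θ−1)}` for all
`t ≥ 0`. -/
theorem gradient_flow_powerlaw_convergence {X H : Type*}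
    [NormedAddCommGroup X] [NormedSpace ℝ X] [CompleteSpace X]
    [NormedAddCommGroup H] [InnerProductSpace ℝ H] [CompleteSpace H]
    (j : X →L[ℝ] H) (hj : Function.Injective j)
    (U : Set X) (hU : IsOpen U)
    (E : X → ℝ) (G : X → X)
    (hE : ∀ x ∈ U, HasFDerivAt E ((innerSL ℝ (j (G x))).comp j) x)
    (xinf : X) (hxinfU : xinf ∈ U) (hcrit : G xinf = 0)
    (σ c a γ θ : ℝ) (hσ : 0 < σ) (hσ1 : σ ≤ 1) (hc : 0 < c) (haγ : a < γ)
    (hθ : 1 / 2 < θ) (hθ' : θ < 1)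
    (hUσ : {x : X | ‖x - xinf‖ < σ} ⊆ U)
    (hbound : ∀ x ∈ U, a ≤ E x ∧ E x ≤ γ)
    (hloj : ∀ x : X, ‖x - xinf‖ < σ → c * |E x - E xinf| ^ θ ≤ ‖j (G x)‖)
    (u : ℝ → X)
    (hu : ∀ t : ℝ, 0 ≤ t → HasDerivAt u (-(G (u t))) t)
    (horbit : ∀ t : ℝ, 0 ≤ t → ‖u t - xinf‖ < σ) :
    ∃ uinf : H, ∀ t : ℝ, 0 ≤ t →
      ‖j (u t) - uinf‖ ≤ (1 / (c * (1 - θ)))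
        * (c ^ 2 * (2 * θ - 1) * t + (γ - a) ^ (1 - 2 * θ)) ^ (-(1 - θ) / (2 * θ - 1)) := by
  have h1θ : (0:ℝ) < 1 - θ := by linarith
  have h2θ : (0:ℝ) < 2 * θ - 1 := by linarith
  have hθ0 : (0:ℝ) < θ := by linarith
  set K : ℝ := 1 / (c * (1 - θ)) with hK
  have hK0 : 0 < K := by positivity
  set Hf : ℝ → ℝ := fun t => E (u t) - E xinf with hHf
  have hmemU : ∀ t : ℝ, 0 ≤ t → u t ∈ U := fun t ht => hUσ (horbit t ht)
  -- derivative of the energy along the flow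
  have hH' : ∀ t : ℝ, 0 ≤ t → HasDerivAt Hf (-‖j (G (u t))‖ ^ 2) t := by
    intro t ht
    have h1 := (hE (u t) (hmemU t ht)).comp_hasDerivAt t (hu t ht)
    have h2 : ((innerSL ℝ (j (G (u t)))).comp j) (-(G (u t))) = -‖j (G (u t))‖ ^ 2 := by
      simp [real_inner_self_eq_norm_sq]
    rw [h2] at h1
    exact h1.sub_const (E xinf)
  have hcont : ContinuousOn Hf (Set.Ici 0) := fun t ht =>
    ((hH' t ht).continuousAt).continuousWithinAt
  -- monotonicity of the energy
  have hanti : AntitoneOn Hf (Set.Ici 0) := by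
    apply antitoneOn_of_deriv_nonpos (convex_Ici 0) hcont
    · intro x hx
      rw [interior_Ici] at hx
      exact ((hH' x (le_of_lt hx)).differentiableAt).differentiableWithinAt
    · intro x hx
      rw [interior_Ici] at hx
      rw [(hH' x (le_of_lt hx)).deriv]
      have := sq_nonneg ‖j (G (u x))‖
      linarith
  have hloj' : ∀ t : ℝ, 0 ≤ t → c * |Hf t| ^ θ ≤ ‖j (G (u t))‖ := fun t ht =>
    hloj (u t) (horbit t ht)
  have hEax : a ≤ E xinf := (hbound xinf hxinfU).1
  have hElow : ∀ t : ℝ, 0 ≤ t → a - E xinf ≤ Hf t := by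
    intro t ht
    have := (hbound (u t) (hmemU t ht)).1
    simp only [hHf]; linarith
  -- the energy never drops below the critical level
  have hnonneg : ∀ t : ℝ, 0 ≤ t → 0 ≤ Hf t := by
    by_contra hcon
    push_neg at hcon
    obtain ⟨t₀, ht₀, hneg⟩ := hcon
    set δ : ℝ := -Hf t₀ with hδdef
    have hδ : 0 < δ := by simp only [hδdef]; linarith
    set m : ℝ := (c * δ ^ θ) ^ 2 with hm
    have hδθ : 0 < δ ^ θ := Real.rpow_pos_of_pos hδ θ
    have hmpos : 0 < m := by positivity
    have hHle : ∀ t : ℝ, t₀ ≤ t → Hf t ≤ Hf t₀ := fun t h =>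
      hanti (Set.mem_Ici.2 ht₀) (Set.mem_Ici.2 (ht₀.trans h)) h
    -- derivative bound on [t₀, ∞)
    have hg : AntitoneOn (fun t => Hf t + m * t) (Set.Ici t₀) := by
      apply antitoneOn_of_deriv_nonpos (convex_Ici t₀)
      · intro x hx
        exact (((hH' x (ht₀.trans hx)).add ((hasDerivAt_id x).const_mul m)).continuousAt).continuousWithinAt
      · intro x hx
        rw [interior_Ici] at hx
        exact (((hH' x (ht₀.trans hx.le)).add
          ((hasDerivAt_id x).const_mul m)).differentiableAt).differentiableWithinAt
      · intro x hx
        rw [interior_Ici] at hx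
        have hx0 : (0:ℝ) ≤ x := ht₀.trans hx.le
        have hd : HasDerivAt (fun t => Hf t + m * t) (-‖j (G (u x))‖ ^ 2 + m) x := by
          have h := (hH' x hx0).add ((hasDerivAt_id x).const_mul m)
          rw [mul_one] at h
          exact h
        rw [hd.deriv]
        have h1 : δ ≤ |Hf x| := by
          have := hHle x hx.le
          rw [abs_of_nonpos (by linarith)]
          simp only [hδdef]; linarith
        have h2 : δ ^ θ ≤ |Hf x| ^ θ := Real.rpow_le_rpow hδ.le h1 hθ0.le
        have h3 : c * δ ^ θ ≤ ‖j (G (u x))‖ :=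
          le_trans (by nlinarith) (hloj' x hx0)
        have h4 : m ≤ ‖j (G (u x))‖ ^ 2 := by
          rw [hm]
          exact pow_le_pow_left₀ (by positivity) h3 2
        linarith
    -- run for long enough to contradict the lower bound on E
    set T : ℝ := t₀ + (Hf t₀ - (a - E xinf) + 1) / m with hT
    have hnum : 0 < Hf t₀ - (a - E xinf) + 1 := by
      have := hElow t₀ ht₀
      linarith
    have hTt₀ : t₀ ≤ T := by
      rw [hT]
      have : 0 < (Hf t₀ - (a - E xinf) + 1) / m := div_pos hnum hmpos
      linarith
    have hgT : Hf T + m * T ≤ Hf t₀ + m * t₀ :=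
      hg (Set.mem_Ici.2 le_rfl) (Set.mem_Ici.2 hTt₀) hTt₀
    have hmT : m * T = m * t₀ + (Hf t₀ - (a - E xinf) + 1) := by
      rw [hT]
      field_simp
    have := hElow T (ht₀.trans hTt₀)
    linarith
  -- flat pieces: once the energy hits the critical level, the flow (in H) is frozen
  have hflat : ∀ s t : ℝ, 0 ≤ s → s ≤ t → Hf s = 0 → j (u t) = j (u s) := by
    intro s t hs hst hHs
    have hzero : ∀ τ, s ≤ τ → Hf τ = 0 := fun τ hτ =>
      le_antisymm (by rw [← hHs]; exact hanti (Set.mem_Ici.2 hs) (Set.mem_Ici.2 (hs.trans hτ)) hτ)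
        (hnonneg τ (hs.trans hτ))
    have hG0 : ∀ τ, s ≤ τ → j (G (u τ)) = 0 := by
      intro τ hτ
      have hτ0 : (0:ℝ) ≤ τ := hs.trans hτ
      have hd : HasDerivWithinAt Hf (-‖j (G (u τ))‖ ^ 2) (Set.Ici τ) τ :=
        (hH' τ hτ0).hasDerivWithinAt
      have hd0 : HasDerivWithinAt Hf 0 (Set.Ici τ) τ := by
        apply (hasDerivWithinAt_const τ (Set.Ici τ) (0:ℝ)).congr
        · intro y hy; exact hzero y (hτ.trans hy)
        · exact hzero τ hτ
      have hu1 := hd.derivWithin (uniqueDiffOn_Ici τ τ Set.self_mem_Ici)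
      have hu2 := hd0.derivWithin (uniqueDiffOn_Ici τ τ Set.self_mem_Ici)
      have : ‖j (G (u τ))‖ ^ 2 = 0 := by rw [hu1] at hu2; linarith
      have : ‖j (G (u τ))‖ = 0 := by
        nlinarith [norm_nonneg (j (G (u τ)))]
      exact norm_eq_zero.mp this
    have hderiv : ∀ τ ∈ Set.Icc s t, HasDerivWithinAt (fun τ => j (u τ)) (0:H) (Set.Icc s t) τ := by
      intro τ hτ
      have h1 : HasDerivAt (fun τ => j (u τ)) (j (-(G (u τ)))) τ :=
        j.hasFDerivAt.comp_hasDerivAt τ (hu τ (hs.trans hτ.1))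
      rw [map_neg, hG0 τ hτ.1, neg_zero] at h1
      exact h1.hasDerivWithinAt
    have := Convex.norm_image_sub_le_of_norm_hasDerivWithin_le hderiv
      (fun x _ => norm_zero.le) (convex_Icc s t) (Set.left_mem_Icc.2 hst) (Set.right_mem_Icc.2 hst)
    have h0 : ‖j (u t) - j (u s)‖ ≤ 0 := by simpa using this
    have h1 := norm_le_zero_iff.mp h0
    rwa [sub_eq_zero] at h1
  -- main differential inequality argument, on intervals where the energy is positive
  have hmain : ∀ s t : ℝ, 0 ≤ s → s ≤ t → (∀ τ ∈ Set.Ico s t, 0 < Hf τ) →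
      ‖j (u t) - j (u s)‖ ≤ K * (Hf s ^ (1 - θ) - Hf t ^ (1 - θ)) := by
    intro s t hs hst hpos
    set f : ℝ → H := fun τ => j (u τ) - j (u s) with hf
    set B : ℝ → ℝ := fun τ => K * (Hf s ^ (1 - θ) - Hf τ ^ (1 - θ)) with hB
    set B' : ℝ → ℝ := fun τ => (1 / c) * (Hf τ ^ (-θ) * ‖j (G (u τ))‖ ^ 2) with hB'
    have hfc : ContinuousOn f (Set.Icc s t) := by
      intro τ hτ
      have h1 : HasDerivAt (fun τ => j (u τ)) (j (-(G (u τ)))) τ :=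
        j.hasFDerivAt.comp_hasDerivAt τ (hu τ (hs.trans hτ.1))
      exact ((h1.continuousAt.sub continuousAt_const)).continuousWithinAt
    have hfd : ∀ τ ∈ Set.Ico s t, HasDerivWithinAt f (-(j (G (u τ)))) (Set.Ici τ) τ := by
      intro τ hτ
      have h1 : HasDerivAt (fun τ => j (u τ)) (j (-(G (u τ)))) τ :=
        j.hasFDerivAt.comp_hasDerivAt τ (hu τ (hs.trans hτ.1))
      rw [map_neg] at h1
      exact (h1.sub_const (j (u s))).hasDerivWithinAt
    have hBc : ContinuousOn B (Set.Icc s t) := by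
      have h1 : ContinuousOn Hf (Set.Icc s t) :=
        hcont.mono (fun x hx => Set.mem_Ici.2 (hs.trans hx.1))
      have h2 : ContinuousOn (fun τ => Hf τ ^ (1 - θ)) (Set.Icc s t) :=
        h1.rpow_const (fun x _ => Or.inr h1θ.le)
      exact continuousOn_const.mul (continuousOn_const.sub h2)
    have hBd : ∀ τ ∈ Set.Ico s t, HasDerivWithinAt B (B' τ) (Set.Ici τ) τ := by
      intro τ hτ
      have hpτ : 0 < Hf τ := hpos τ hτ
      have h1 : HasDerivAt (fun x => Hf x ^ (1 - θ))
          (-‖j (G (u τ))‖ ^ 2 * (1 - θ) * Hf τ ^ (1 - θ - 1)) τ :=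
        (hH' τ (hs.trans hτ.1)).rpow_const (Or.inl hpτ.ne')
      have h2 := (h1.const_sub (Hf s ^ (1 - θ))).const_mul K
      have h3 : K * -(-‖j (G (u τ))‖ ^ 2 * (1 - θ) * Hf τ ^ (1 - θ - 1)) = B' τ := by
        have he : (1 - θ - 1 : ℝ) = -θ := by ring
        rw [he, hB', hK]
        field_simp
      rw [h3] at h2
      exact h2.hasDerivWithinAt
    have hbound' : ∀ τ ∈ Set.Ico s t, ‖-(j (G (u τ)))‖ ≤ B' τ := by
      intro τ hτ
      have hτ0 : (0:ℝ) ≤ τ := hs.trans hτ.1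
      have hpτ : 0 < Hf τ := hpos τ hτ
      have hlo : c * Hf τ ^ θ ≤ ‖j (G (u τ))‖ := by
        have := hloj' τ hτ0
        rwa [abs_of_nonneg (hnonneg τ hτ0)] at this
      have hrθ : 0 < Hf τ ^ θ := Real.rpow_pos_of_pos hpτ θ
      rw [norm_neg]
      have key : ‖j (G (u τ))‖ = (1 / c) * (Hf τ ^ (-θ) * ((c * Hf τ ^ θ) * ‖j (G (u τ))‖)) := by
        rw [Real.rpow_neg hpτ.le]
        field_simp
      rw [key, hB']
      have h5 : (c * Hf τ ^ θ) * ‖j (G (u τ))‖ ≤ ‖j (G (u τ))‖ ^ 2 := by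
        rw [sq]
        exact mul_le_mul_of_nonneg_right hlo (norm_nonneg _)
      have h6 : (0:ℝ) ≤ Hf τ ^ (-θ) := Real.rpow_nonneg hpτ.le _
      have h7 : (0:ℝ) ≤ 1 / c := by positivity
      exact mul_le_mul_of_nonneg_left (mul_le_mul_of_nonneg_left h5 h6) h7
    have hfs : ‖f s‖ ≤ B s := by simp [hf, hB]
    have := image_norm_le_of_norm_deriv_right_le_deriv_boundary' hfc hfd hfs hBc hBd hbound'
      (Set.right_mem_Icc.2 hst)
    simpa [hf, hB] using this
  -- combined estimate, valid for all 0 ≤ s ≤ t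
  have hmaster : ∀ s t : ℝ, 0 ≤ s → s ≤ t →
      ‖j (u t) - j (u s)‖ ≤ K * (Hf s ^ (1 - θ) - Hf t ^ (1 - θ)) := by
    intro s t hs hst
    by_cases hz : ∃ τ ∈ Set.Ico s t, Hf τ = 0
    · set S : Set ℝ := {τ | τ ∈ Set.Icc s t ∧ Hf τ = 0} with hS
      have hne : S.Nonempty := by
        obtain ⟨τ, hτ, hτ0⟩ := hz
        exact ⟨τ, ⟨⟨hτ.1, hτ.2.le⟩, hτ0⟩⟩
      have hbdd : BddBelow S := ⟨s, fun x hx => hx.1.1⟩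
      have hclosed : IsClosed S := by
        have h1 : ContinuousOn Hf (Set.Icc s t) :=
          hcont.mono (fun x hx => Set.mem_Ici.2 (hs.trans hx.1))
        have h2 : S = Set.Icc s t ∩ Hf ⁻¹' {0} := by
          ext x
          simp [hS, Set.mem_inter_iff, and_comm]
        rw [h2]
        exact h1.preimage_isClosed_of_isClosed isClosed_Icc isClosed_singleton
      have ht₁S : sInf S ∈ S := hclosed.csInf_mem hne hbdd
      set t₁ : ℝ := sInf S with ht₁def
      obtain ⟨ht₁Icc, ht₁0⟩ := ht₁S
      have ht₁pos : ∀ τ ∈ Set.Ico s t₁, 0 < Hf τ := by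
        intro τ hτ
        rcases (hnonneg τ (hs.trans hτ.1)).lt_or_eq with h | h
        · exact h
        · exfalso
          have : τ ∈ S := ⟨⟨hτ.1, hτ.2.le.trans ht₁Icc.2⟩, h.symm⟩
          have := csInf_le hbdd this
          exact absurd hτ.2 (not_lt.2 this)
      have h1 := hmain s t₁ hs ht₁Icc.1 ht₁pos
      have hjeq : j (u t) = j (u t₁) := hflat t₁ t (hs.trans ht₁Icc.1) ht₁Icc.2 ht₁0
      have hHt : Hf t = 0 := le_antisymm
        (by rw [← ht₁0]
            exact hanti (Set.mem_Ici.2 (hs.trans ht₁Icc.1))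
              (Set.mem_Ici.2 (hs.trans hst)) ht₁Icc.2)
        (hnonneg t (hs.trans hst))
      rw [hjeq, hHt]
      rw [ht₁0] at h1
      exact h1
    · push_neg at hz
      exact hmain s t hs hst (fun τ hτ => (hnonneg τ (hs.trans hτ.1)).lt_of_ne'
        (hz τ hτ))
  -- the power-law decay rate of the energy
  have hD : ∀ t : ℝ, 0 ≤ t → 0 < c ^ 2 * (2 * θ - 1) * t + (γ - a) ^ (1 - 2 * θ) := by
    intro t ht
    have h1 : 0 < (γ - a) ^ (1 - 2 * θ) := Real.rpow_pos_of_pos (by linarith) _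
    have h2 : 0 ≤ c ^ 2 * (2 * θ - 1) * t := by positivity
    linarith
  have hrate : ∀ t : ℝ, 0 ≤ t → Hf t ^ (1 - θ) ≤
      (c ^ 2 * (2 * θ - 1) * t + (γ - a) ^ (1 - 2 * θ)) ^ (-(1 - θ) / (2 * θ - 1)) := by
    intro t ht
    rcases (hnonneg t ht).lt_or_eq with hpt | hpt
    · -- positive case
      have hposIcc : ∀ τ ∈ Set.Icc 0 t, 0 < Hf τ := by
        intro τ hτ
        exact lt_of_lt_of_le hpt (hanti (Set.mem_Ici.2 hτ.1) (Set.mem_Ici.2 ht) hτ.2)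
      set g : ℝ → ℝ := fun τ => Hf τ ^ (1 - 2 * θ) - c ^ 2 * (2 * θ - 1) * τ with hg
      have hgd : ∀ x ∈ Set.Icc 0 t, HasDerivAt g
          (-‖j (G (u x))‖ ^ 2 * (1 - 2 * θ) * Hf x ^ (1 - 2 * θ - 1) - c ^ 2 * (2 * θ - 1) * 1) x := by
        intro x hx
        exact ((hH' x hx.1).rpow_const (Or.inl (hposIcc x hx).ne')).sub
          ((hasDerivAt_id x).const_mul (c ^ 2 * (2 * θ - 1)))
      have hgmono : MonotoneOn g (Set.Icc 0 t) := by
        apply monotoneOn_of_deriv_nonneg (convex_Icc 0 t)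
        · exact fun x hx => ((hgd x hx).continuousAt).continuousWithinAt
        · intro x hx
          rw [interior_Icc] at hx
          exact ((hgd x ⟨hx.1.le, hx.2.le⟩).differentiableAt).differentiableWithinAt
        · intro x hx
          rw [interior_Icc] at hx
          have hx' : x ∈ Set.Icc 0 t := ⟨hx.1.le, hx.2.le⟩
          rw [(hgd x hx').deriv]
          have hpx : 0 < Hf x := hposIcc x hx'
          have hlo : c * Hf x ^ θ ≤ ‖j (G (u x))‖ := by
            have := hloj' x hx'.1
            rwa [abs_of_nonneg hpx.le] at this
          have key : c ^ 2 * Hf x ^ (2 * θ) ≤ ‖j (G (u x))‖ ^ 2 := by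
            have h1 : (c * Hf x ^ θ) ^ 2 ≤ ‖j (G (u x))‖ ^ 2 :=
              pow_le_pow_left₀ (by positivity) hlo 2
            have h2 : (c * Hf x ^ θ) ^ 2 = c ^ 2 * Hf x ^ (2 * θ) := by
              rw [mul_pow, ← Real.rpow_natCast (Hf x ^ θ) 2, ← Real.rpow_mul hpx.le]
              norm_num [mul_comm θ 2]
            rwa [h2] at h1
          have hinv : Hf x ^ (2 * θ) * Hf x ^ (-(2 * θ)) = 1 := by
            rw [← Real.rpow_add hpx]; simp
          have hmul : c ^ 2 ≤ ‖j (G (u x))‖ ^ 2 * Hf x ^ (-(2 * θ)) := by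
            calc c ^ 2 = c ^ 2 * (Hf x ^ (2 * θ) * Hf x ^ (-(2 * θ))) := by rw [hinv]; ring
              _ = (c ^ 2 * Hf x ^ (2 * θ)) * Hf x ^ (-(2 * θ)) := by ring
              _ ≤ ‖j (G (u x))‖ ^ 2 * Hf x ^ (-(2 * θ)) :=
                mul_le_mul_of_nonneg_right key (Real.rpow_nonneg hpx.le _)
          have he : (1 - 2 * θ - 1 : ℝ) = -(2 * θ) := by ring
          rw [he]
          nlinarith
      have hg0t := hgmono (Set.left_mem_Icc.2 ht) (Set.right_mem_Icc.2 ht) ht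
      have hH0 : Hf 0 ≤ γ - a := by
        have h1 := (hbound (u 0) (hmemU 0 le_rfl)).2
        simp only [hHf]; linarith
      have hH0pos : 0 < Hf 0 := hposIcc 0 (Set.left_mem_Icc.2 ht)
      have hbase : (γ - a) ^ (1 - 2 * θ) ≤ Hf 0 ^ (1 - 2 * θ) :=
        Real.rpow_le_rpow_of_nonpos hH0pos hH0 (by linarith)
      have hDle : c ^ 2 * (2 * θ - 1) * t + (γ - a) ^ (1 - 2 * θ) ≤ Hf t ^ (1 - 2 * θ) := by
        have h := hg0t
        simp only [hg] at h
        have h' : Hf 0 ^ (1 - 2 * θ) ≤ Hf t ^ (1 - 2 * θ) - c ^ 2 * (2 * θ - 1) * t := by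
          simpa using h
        linarith
      have hrw : Hf t ^ (1 - θ) = (Hf t ^ (1 - 2 * θ)) ^ (-(1 - θ) / (2 * θ - 1)) := by
        rw [← Real.rpow_mul hpt.le]
        congr 1
        rw [eq_comm, mul_div_assoc', div_eq_iff h2θ.ne']
        ring
      rw [hrw]
      exact Real.rpow_le_rpow_of_nonpos (hD t ht) hDle
        (div_nonpos_of_nonpos_of_nonneg (by linarith) h2θ.le)
    · -- the energy already reached the critical level
      rw [← hpt, Real.zero_rpow (by linarith : (1 - θ:ℝ) ≠ 0)]
      exact (Real.rpow_pos_of_pos (hD t ht) _).le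
  -- Cauchy sequence and limit
  set b : ℕ → ℝ := fun N =>
    K * (c ^ 2 * (2 * θ - 1) * (N:ℝ) + (γ - a) ^ (1 - 2 * θ)) ^ (-(1 - θ) / (2 * θ - 1)) with hb
  have hdistb : ∀ s t : ℝ, 0 ≤ s → s ≤ t → ∀ N : ℝ, 0 ≤ N → N ≤ s →
      ‖j (u t) - j (u s)‖ ≤
        K * (c ^ 2 * (2 * θ - 1) * N + (γ - a) ^ (1 - 2 * θ)) ^ (-(1 - θ) / (2 * θ - 1)) := by
    intro s t hs hst N hN hNs
    have h1 := hmaster s t hs hst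
    have h2 : Hf t ^ (1 - θ) ≥ 0 := Real.rpow_nonneg (hnonneg t (hs.trans hst)) _
    have h3 : Hf s ^ (1 - θ) ≤ Hf N ^ (1 - θ) :=
      Real.rpow_le_rpow (hnonneg s hs)
        (hanti (Set.mem_Ici.2 hN) (Set.mem_Ici.2 hs) hNs) h1θ.le
    have h4 := hrate N hN
    calc ‖j (u t) - j (u s)‖ ≤ K * (Hf s ^ (1 - θ) - Hf t ^ (1 - θ)) := h1
      _ ≤ K * Hf N ^ (1 - θ) := mul_le_mul_of_nonneg_left (by linarith) hK0.le
      _ ≤ _ := mul_le_mul_of_nonneg_left h4 hK0.le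
  have hcauchy : CauchySeq (fun n : ℕ => j (u n)) := by
    apply cauchySeq_of_le_tendsto_0 b
    · intro n m N hn hm
      rcases le_total (n:ℝ) (m:ℝ) with h | h
      · rw [dist_eq_norm, norm_sub_rev]
        exact hdistb n m (Nat.cast_nonneg n) h N (Nat.cast_nonneg N) (Nat.cast_le.2 hn)
      · rw [dist_eq_norm]
        exact hdistb m n (Nat.cast_nonneg m) h N (Nat.cast_nonneg N) (Nat.cast_le.2 hm)
    · have h1 : Filter.Tendsto (fun N : ℕ => c ^ 2 * (2 * θ - 1) * (N:ℝ) + (γ - a) ^ (1 - 2 * θ))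
          Filter.atTop Filter.atTop := by
        apply Filter.tendsto_atTop_add_const_right
        exact Filter.Tendsto.const_mul_atTop (by positivity) tendsto_natCast_atTop_atTop
      have h2 : Filter.Tendsto (fun x : ℝ => x ^ (-(1 - θ) / (2 * θ - 1)))
          Filter.atTop (nhds 0) := by
        have : (-(1 - θ) / (2 * θ - 1) : ℝ) = -((1 - θ) / (2 * θ - 1)) := by ring
        rw [this]
        exact tendsto_rpow_neg_atTop (by positivity)
      have h3 := (h2.comp h1).const_mul K
      rw [mul_zero] at h3
      exact h3
  obtain ⟨uinf, hlim⟩ := cauchySeq_tendsto_of_complete hcauchy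
  refine ⟨uinf, fun t ht => ?_⟩
  have hlim2 : Filter.Tendsto (fun n : ℕ => ‖j (u t) - j (u n)‖)
      Filter.atTop (nhds ‖j (u t) - uinf‖) :=
    (Filter.Tendsto.sub tendsto_const_nhds hlim).norm
  have hub : ∀ᶠ n : ℕ in Filter.atTop, ‖j (u t) - j (u n)‖ ≤
      K * (c ^ 2 * (2 * θ - 1) * t + (γ - a) ^ (1 - 2 * θ)) ^ (-(1 - θ) / (2 * θ - 1)) := by
    filter_upwards [Filter.eventually_ge_atTop ⌈t⌉₊] with n hn
    have htn : t ≤ (n:ℝ) := le_trans (Nat.le_ceil t) (Nat.cast_le.2 hn)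
    rw [norm_sub_rev]
    exact hdistb t n ht htn t ht le_rfl
  exact le_of_tendsto hlim2 hub
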